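/- The log-posterior objective L is concave on the positive orthant: fix an integer K ≥ 2, parameters β ∈ (0,1], γ > 0, η > 0, a vector ν ∈ ℝ^K, and a vector s ∈ ℝ^K with all entries positive. Define, for α ∈ ℝ^K with all entries positive, L(α) := log Γ(K(1−β) + β·∑_{i=1}^K α_i) − ∑_{i=1}^K log Γ(β·α_i + (1−β)) + β·∑_{i=1}^K α_i·log s_i + γ·η·[log Γ(∑_{i=1}^K α_i) − ∑_{i=1}^K log Γ(α_i)] − γ·∑_{i=1}^K α_i·ν_i. Then L is a concave function of α on the set {α ∈ ℝ^K : α_i > 0 for all i}. -/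

import Mathlib

set_option maxHeartbeats 1000000

open Filter MeasureTheory Set Real

noncomputable def myBeta (x y : ℝ) : ℝ := Real.Gamma x * Real.Gamma y / Real.Gamma (x + y)

lemma myBeta_pos {x y : ℝ} (hx : 0 < x) (hy : 0 < y) : 0 < myBeta x y := by
  unfold myBeta
  have := Real.Gamma_pos_of_pos hx
  have := Real.Gamma_pos_of_pos hy
  have := Real.Gamma_pos_of_pos (add_pos hx hy)
  positivity

lemma betaIntegrand_eq {p q t : ℝ} (h0 : 0 ≤ t) (h1 : t ≤ 1) :
    ((t : ℂ) ^ ((p : ℂ) - 1) * (1 - (t : ℂ)) ^ ((q : ℂ) - 1)) =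
      ((t ^ (p - 1) * (1 - t) ^ (q - 1) : ℝ) : ℂ) := by
  have e1 : ((p : ℂ) - 1) = ((p - 1 : ℝ) : ℂ) := by push_cast; ring
  have e2 : ((q : ℂ) - 1) = ((q - 1 : ℝ) : ℂ) := by push_cast; ring
  have e3 : (1 - (t : ℂ)) = ((1 - t : ℝ) : ℂ) := by push_cast; ring
  rw [e1, e2, e3, ← Complex.ofReal_cpow h0, ← Complex.ofReal_cpow (by linarith), ← Complex.ofReal_mul]

lemma betaIntegrand_integrableOn {p q : ℝ} (hp : 0 < p) (hq : 0 < q) :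
    IntegrableOn (fun t : ℝ => t ^ (p - 1) * (1 - t) ^ (q - 1)) (Ioo (0:ℝ) 1) := by
  have h := Complex.betaIntegral_convergent (u := (p : ℂ)) (v := (q : ℂ)) (by simpa) (by simpa)
  rw [intervalIntegrable_iff_integrableOn_Ioo_of_le zero_le_one] at h
  refine MeasureTheory.IntegrableOn.congr_fun h.re (fun t ht => ?_) measurableSet_Ioo
  show (((t:ℂ)) ^ ((p:ℂ) - 1) * (1 - (t:ℂ)) ^ ((q:ℂ) - 1)).re = _
  rw [betaIntegrand_eq ht.1.le ht.2.le, Complex.ofReal_re]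

lemma myBeta_eq_integral {p q : ℝ} (hp : 0 < p) (hq : 0 < q) :
    myBeta p q = ∫ t in Ioo (0:ℝ) 1, t ^ (p - 1) * (1 - t) ^ (q - 1) := by
  have h := Complex.Gamma_mul_Gamma_eq_betaIntegral (s := (p : ℂ)) (t := (q : ℂ))
    (by simpa) (by simpa)
  have hbi : Complex.betaIntegral p q =
      ((∫ t in (0:ℝ)..1, t ^ (p - 1) * (1 - t) ^ (q - 1) : ℝ) : ℂ) := by
    rw [Complex.betaIntegral, ← intervalIntegral.integral_ofReal]
    refine intervalIntegral.integral_congr (fun t ht => ?_)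
    rw [Set.uIcc_of_le zero_le_one] at ht
    exact betaIntegrand_eq ht.1 ht.2
  rw [hbi, ← Complex.ofReal_add, Complex.Gamma_ofReal, Complex.Gamma_ofReal,
    Complex.Gamma_ofReal, ← Complex.ofReal_mul, ← Complex.ofReal_mul] at h
  have h' := Complex.ofReal_inj.mp h
  have hG := Real.Gamma_pos_of_pos (add_pos hp hq)
  rw [intervalIntegral.integral_of_le zero_le_one, ← integral_Ioc_eq_integral_Ioo] at *
  unfold myBeta
  rw [h']
  field_simp

lemma myBeta_holder {s t u v a b : ℝ} (hs : 0 < s) (ht : 0 < t) (hu : 0 < u) (hv : 0 < v)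
    (ha : 0 < a) (hb : 0 < b) (hab : a + b = 1) :
    myBeta (a * s + b * u) (a * t + b * v) ≤ myBeta s t ^ a * myBeta u v ^ b := by
  let f : ℝ → ℝ → ℝ → ℝ → ℝ := fun c p q x => x ^ (c * (p - 1)) * (1 - x) ^ (c * (q - 1))
  have e : Real.HolderConjugate (1 / a) (1 / b) := Real.holderConjugate_one_div ha hb hab
  have hsu : 0 < a * s + b * u := by positivity
  have htv : 0 < a * t + b * v := by positivity
  have posf : ∀ c p q x : ℝ, x ∈ Ioo (0:ℝ) 1 → 0 ≤ f c p q x := fun c p q x hx =>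
    mul_nonneg (rpow_nonneg hx.1.le _) (rpow_nonneg (by linarith [hx.2] : (0:ℝ) ≤ 1 - x) _)
  have posf' : ∀ c p q : ℝ, 0 ≤ᵐ[volume.restrict (Ioo 0 1)] f c p q := fun c p q =>
    (ae_restrict_iff' measurableSet_Ioo).mpr (ae_of_all _ (posf c p q))
  have fpow : ∀ {c : ℝ} (_ : 0 < c) (p q : ℝ) {x : ℝ} (_ : x ∈ Ioo (0:ℝ) 1),
      x ^ (p - 1) * (1 - x) ^ (q - 1) = f c p q x ^ (1 / c) := by
    intro c hc p q x hx
    dsimp only [f]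
    rw [mul_rpow (rpow_nonneg hx.1.le _) (rpow_nonneg (by linarith [hx.2] : (0:ℝ) ≤ 1 - x) _),
      ← rpow_mul hx.1.le, ← rpow_mul (by linarith [hx.2] : (0:ℝ) ≤ 1 - x)]
    congr 2 <;> field_simp
  have fmeas : ∀ c p q : ℝ,
      AEStronglyMeasurable (f c p q) (volume.restrict (Ioo 0 1)) := by
    intro c p q
    refine ContinuousOn.aestronglyMeasurable ?_ measurableSet_Ioo
    refine continuousOn_of_forall_continuousAt fun x hx => ContinuousAt.mul ?_ ?_
    · exact continuousAt_rpow_const _ _ (Or.inl hx.1.ne')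
    · exact (continuousAt_rpow_const _ _ (Or.inl (sub_pos.mpr hx.2).ne')).comp
        ((continuous_const.sub continuous_id).continuousAt)
  have f_mem_Lp : ∀ {c p q : ℝ} (hc : 0 < c) (hp : 0 < p) (hq : 0 < q),
      MemLp (f c p q) (ENNReal.ofReal (1 / c)) (volume.restrict (Ioo 0 1)) := by
    intro c p q hc hp hq
    have A : ENNReal.ofReal (1 / c) ≠ 0 := by
      rwa [Ne, ENNReal.ofReal_eq_zero, not_le, one_div_pos]
    have B : ENNReal.ofReal (1 / c) ≠ ⊤ := ENNReal.ofReal_ne_top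
    rw [← memLp_norm_rpow_iff (fmeas c p q) A B, ENNReal.toReal_ofReal (one_div_nonneg.mpr hc.le),
      ENNReal.div_self A B, memLp_one_iff_integrable]
    apply Integrable.congr (betaIntegrand_integrableOn hp hq)
    refine eventuallyEq_of_mem (self_mem_ae_restrict measurableSet_Ioo) fun x hx => ?_
    rw [fpow hc p q hx]
    congr 1
    exact (norm_of_nonneg (posf _ _ _ x hx)).symm
  rw [myBeta_eq_integral hs ht, myBeta_eq_integral hu hv, myBeta_eq_integral hsu htv]
  convert MeasureTheory.integral_mul_le_Lp_mul_Lq_of_nonneg e (posf' a s t) (posf' b u v)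
      (f_mem_Lp ha hs ht) (f_mem_Lp hb hu hv) using 1
  · refine setIntegral_congr_fun measurableSet_Ioo fun x hx => ?_
    dsimp only [f]
    have A : x ^ (a * s + b * u - 1) = x ^ (a * (s - 1)) * x ^ (b * (u - 1)) := by
      rw [← rpow_add hx.1]; congr 1; linarith
    have B : (1 - x) ^ (a * t + b * v - 1) = (1 - x) ^ (a * (t - 1)) * (1 - x) ^ (b * (v - 1)) := by
      rw [← rpow_add (by linarith [hx.2] : (0:ℝ) < 1 - x)]; congr 1; linarith
    rw [A, B]; ring
  · rw [one_div_one_div, one_div_one_div]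
    congr 1
    · congr 1
      exact setIntegral_congr_fun measurableSet_Ioo fun x hx => fpow ha s t hx
    · congr 1
      exact setIntegral_congr_fun measurableSet_Ioo fun x hx => fpow hb u v hx

lemma log_myBeta_eq {x y : ℝ} (hx : 0 < x) (hy : 0 < y) :
    Real.log (myBeta x y) =
      Real.log (Real.Gamma x) + Real.log (Real.Gamma y) - Real.log (Real.Gamma (x + y)) := by
  unfold myBeta
  have gx := (Real.Gamma_pos_of_pos hx).ne'
  have gy := (Real.Gamma_pos_of_pos hy).ne'
  rw [Real.log_div (by positivity) (Real.Gamma_pos_of_pos (add_pos hx hy)).ne',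
    Real.log_mul gx gy]

lemma concave_two : ConcaveOn ℝ {p : ℝ × ℝ | 0 < p.1 ∧ 0 < p.2}
    (fun p => Real.log (Real.Gamma (p.1 + p.2)) - Real.log (Real.Gamma p.1)
      - Real.log (Real.Gamma p.2)) := by
  have hconv : Convex ℝ {p : ℝ × ℝ | 0 < p.1 ∧ 0 < p.2} := by
    have : {p : ℝ × ℝ | 0 < p.1 ∧ 0 < p.2} = (Ioi (0:ℝ)) ×ˢ (Ioi (0:ℝ)) := by
      ext p; simp [Set.mem_prod]
    rw [this]
    exact (convex_Ioi 0).prod (convex_Ioi 0)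
  refine concaveOn_iff_forall_pos.mpr ⟨hconv, fun {p} hp {q} hq a b ha hb hab => ?_⟩
  obtain ⟨hp1, hp2⟩ := hp
  obtain ⟨hq1, hq2⟩ := hq
  have key := myBeta_holder hp1 hp2 hq1 hq2 ha hb hab
  have h1 : 0 < myBeta p.1 p.2 := myBeta_pos hp1 hp2
  have h2 : 0 < myBeta q.1 q.2 := myBeta_pos hq1 hq2
  have hsum1 : 0 < a * p.1 + b * q.1 := by positivity
  have hsum2 : 0 < a * p.2 + b * q.2 := by positivity
  have hlog : Real.log (myBeta (a * p.1 + b * q.1) (a * p.2 + b * q.2)) ≤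
      a * Real.log (myBeta p.1 p.2) + b * Real.log (myBeta q.1 q.2) := by
    calc Real.log (myBeta (a * p.1 + b * q.1) (a * p.2 + b * q.2))
        ≤ Real.log (myBeta p.1 p.2 ^ a * myBeta q.1 q.2 ^ b) :=
          Real.log_le_log (myBeta_pos hsum1 hsum2) key
      _ = a * Real.log (myBeta p.1 p.2) + b * Real.log (myBeta q.1 q.2) := by
          rw [Real.log_mul (by positivity) (by positivity), Real.log_rpow h1, Real.log_rpow h2]
  have e1 := log_myBeta_eq hp1 hp2
  have e2 := log_myBeta_eq hq1 hq2
  have e3 := log_myBeta_eq hsum1 hsum2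
  simp only [smul_eq_mul, Prod.smul_fst, Prod.smul_snd, Prod.fst_add, Prod.snd_add,
    Prod.smul_mk] at *
  nlinarith [hlog]

/-- composition of a concave function with an affine-like map. -/
lemma concaveOn_comp_affine {E F : Type*} [AddCommGroup E] [Module ℝ E]
    [AddCommGroup F] [Module ℝ F]
    {S : Set E} {T : Set F} {G : F → ℝ} (hG : ConcaveOn ℝ T G) (g : E → F)
    (hgaff : ∀ (x y : E) (a b : ℝ), 0 ≤ a → 0 ≤ b → a + b = 1 →
      g (a • x + b • y) = a • g x + b • g y)
    (hmaps : ∀ x ∈ S, g x ∈ T) (hS : Convex ℝ S) :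
    ConcaveOn ℝ S (fun x => G (g x)) := by
  refine ⟨hS, fun x hx y hy a b ha hb hab => ?_⟩
  show a • G (g x) + b • G (g y) ≤ G (g (a • x + b • y))
  rw [hgaff x y a b ha hb hab]
  exact hG.2 (hmaps x hx) (hmaps y hy) ha hb hab

lemma convex_posOrthant (n : ℕ) : Convex ℝ {α : Fin n → ℝ | ∀ i, 0 < α i} := by
  have : {α : Fin n → ℝ | ∀ i, 0 < α i} = Set.pi Set.univ (fun _ => Ioi (0:ℝ)) := by
    ext α; simp [Set.mem_pi]
  rw [this]
  exact convex_pi fun i _ => convex_Ioi 0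

lemma logA_concave_aux : ∀ m : ℕ, ConcaveOn ℝ {α : Fin (m + 1) → ℝ | ∀ i, 0 < α i}
    (fun α => Real.log (Real.Gamma (∑ i, α i)) - ∑ i, Real.log (Real.Gamma (α i))) := by
  intro m
  induction m with
  | zero =>
    have : (fun α : Fin 1 → ℝ => Real.log (Real.Gamma (∑ i, α i))
        - ∑ i, Real.log (Real.Gamma (α i))) = fun _ => (0:ℝ) := by
      funext α; simp [Fin.sum_univ_one]
    rw [this]
    exact concaveOn_const _ (convex_posOrthant 1)
  | succ n ih =>
    have hS := convex_posOrthant (n + 2)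
    set P : (Fin (n + 2) → ℝ) → ℝ := fun α =>
      Real.log (Real.Gamma ((∑ i : Fin (n+1), α i.castSucc) + α (Fin.last (n+1))))
        - Real.log (Real.Gamma (∑ i : Fin (n+1), α i.castSucc))
        - Real.log (Real.Gamma (α (Fin.last (n+1)))) with hPdef
    set Q : (Fin (n + 2) → ℝ) → ℝ := fun α =>
      Real.log (Real.Gamma (∑ i : Fin (n+1), α i.castSucc))
        - ∑ i : Fin (n+1), Real.log (Real.Gamma (α i.castSucc)) with hQdef
    have hP : ConcaveOn ℝ {α : Fin (n + 2) → ℝ | ∀ i, 0 < α i} P := by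
      have := concaveOn_comp_affine (E := Fin (n+2) → ℝ) concave_two
        (fun α : Fin (n+2) → ℝ => ((∑ i : Fin (n+1), α i.castSucc), α (Fin.last (n+1))))
        (by
          intro x y a b _ _ _
          simp only [Pi.add_apply, Pi.smul_apply, smul_eq_mul, Prod.smul_mk, Prod.mk_add_mk,
            Prod.smul_fst, Prod.smul_snd]
          refine Prod.ext ?_ rfl
          rw [Finset.sum_add_distrib, Finset.mul_sum, Finset.mul_sum])
        (by
          intro α hα
          have hα' : ∀ i, 0 < α i := hα
          show 0 < (∑ i : Fin (n+1), α i.castSucc) ∧ 0 < α (Fin.last (n+1))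
          exact ⟨Finset.sum_pos (fun i _ => hα' _) Finset.univ_nonempty, hα' _⟩) hS
      exact this
    have hQ : ConcaveOn ℝ {α : Fin (n + 2) → ℝ | ∀ i, 0 < α i} Q := by
      have := concaveOn_comp_affine (E := Fin (n+2) → ℝ) ih
        (fun α : Fin (n+2) → ℝ => α ∘ Fin.castSucc)
        (fun x y a b _ _ _ => rfl)
        (fun α (hα : ∀ i, 0 < α i) i => hα _) hS
      exact this
    have key : ∀ α : Fin (n + 2) → ℝ,
        Real.log (Real.Gamma (∑ i, α i)) - ∑ i, Real.log (Real.Gamma (α i)) = P α + Q α := by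
      intro α
      rw [hPdef, hQdef]
      rw [Fin.sum_univ_castSucc (f := α), Fin.sum_univ_castSucc
        (f := fun i => Real.log (Real.Gamma (α i)))]
      ring
    refine ⟨hS, fun x hx y hy a b ha hb hab => ?_⟩
    have i1 := hP.2 hx hy ha hb hab
    have i2 := hQ.2 hx hy ha hb hab
    simp only [smul_eq_mul] at *
    rw [key x, key y, key (a • x + b • y)]
    linarith

/-- The log-posterior objective `L` is concave on the positive orthant. -/
theorem logPosterior_concave (K : ℕ) (hK : 2 ≤ K) (β γ η : ℝ)
    (hβ : 0 < β) (hβ1 : β ≤ 1) (hγ : 0 < γ) (hη : 0 < η)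
    (ν s : Fin K → ℝ) (hs : ∀ i, 0 < s i) :
    ConcaveOn ℝ {α : Fin K → ℝ | ∀ i, 0 < α i}
      (fun α : Fin K → ℝ =>
        Real.log (Real.Gamma ((K : ℝ) * (1 - β) + β * ∑ i, α i))
          - ∑ i, Real.log (Real.Gamma (β * α i + (1 - β)))
          + β * ∑ i, α i * Real.log (s i)
          + γ * η * (Real.log (Real.Gamma (∑ i, α i))
              - ∑ i, Real.log (Real.Gamma (α i)))
          - γ * ∑ i, α i * ν i) := by
  obtain ⟨m, rfl⟩ : ∃ m, K = m + 1 := ⟨K - 1, by omega⟩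
  have hS := convex_posOrthant (m + 1)
  have hF := logA_concave_aux m
  set F : (Fin (m + 1) → ℝ) → ℝ := fun α =>
    Real.log (Real.Gamma (∑ i, α i)) - ∑ i, Real.log (Real.Gamma (α i)) with hFdef
  set g : (Fin (m + 1) → ℝ) → (Fin (m + 1) → ℝ) := fun α i => β * α i + (1 - β) with hgdef
  set lin : (Fin (m + 1) → ℝ) → ℝ := fun α =>
    β * ∑ i, α i * Real.log (s i) - γ * ∑ i, α i * ν i with hlindef
  have h1 : ConcaveOn ℝ {α : Fin (m + 1) → ℝ | ∀ i, 0 < α i} (fun α => F (g α)) := by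
    refine concaveOn_comp_affine hF g ?_ ?_ hS
    · intro x y a b ha hb hab
      funext i
      simp only [hgdef, Pi.add_apply, Pi.smul_apply, smul_eq_mul]
      linear_combination (β - 1) * hab
    · intro α hα
      have hα' : ∀ i, 0 < α i := hα
      intro i
      have : 0 < β * α i := mul_pos hβ (hα' i)
      show 0 < β * α i + (1 - β)
      linarith
  have hsumg : ∀ α : Fin (m + 1) → ℝ,
      ∑ i, (β * α i + (1 - β)) = β * ∑ i, α i + (↑(m + 1) : ℝ) * (1 - β) := by
    intro α
    rw [Finset.sum_add_distrib, Finset.sum_const, Finset.card_univ, Fintype.card_fin,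
      ← Finset.mul_sum, nsmul_eq_mul]
  have key : ∀ α : Fin (m + 1) → ℝ,
      Real.log (Real.Gamma ((↑(m + 1) : ℝ) * (1 - β) + β * ∑ i, α i))
          - ∑ i, Real.log (Real.Gamma (β * α i + (1 - β)))
          + β * ∑ i, α i * Real.log (s i)
          + γ * η * (Real.log (Real.Gamma (∑ i, α i))
              - ∑ i, Real.log (Real.Gamma (α i)))
          - γ * ∑ i, α i * ν i
        = F (g α) + (γ * η) * F α + lin α := by
    intro α
    simp only [hFdef, hgdef, hlindef]
    rw [hsumg α, show β * ∑ i, α i + (↑(m + 1) : ℝ) * (1 - β)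
      = (↑(m + 1) : ℝ) * (1 - β) + β * ∑ i, α i from by ring]
    ring
  refine ⟨hS, fun x hx y hy a b ha hb hab => ?_⟩
  have i1 := h1.2 hx hy ha hb hab
  have i2 := hF.2 hx hy ha hb hab
  have hc : (0:ℝ) ≤ γ * η := by positivity
  have i2' := mul_le_mul_of_nonneg_left i2 hc
  have hsum2 : ∀ (c : Fin (m + 1) → ℝ),
      ∑ i, (a • x + b • y) i * c i = a * ∑ i, x i * c i + b * ∑ i, y i * c i := by
    intro c
    rw [Finset.mul_sum, Finset.mul_sum, ← Finset.sum_add_distrib]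
    exact Finset.sum_congr rfl fun i _ => by
      simp only [Pi.add_apply, Pi.smul_apply, smul_eq_mul]; ring
  have elin : lin (a • x + b • y) = a * lin x + b * lin y := by
    simp only [hlindef]
    rw [hsum2 (fun i => Real.log (s i)), hsum2 ν]
    ring
  simp only [smul_eq_mul] at i1 i2 i2' ⊢
  rw [key x, key y, key (a • x + b • y), elin]
  nlinarith [i1, i2']
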